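/- arXiv:1511.00542 — 9 statements merged into one kernel-verified Lean document; each statement's English description precedes it below -/
import Mathlib

section
/- Let K, D be positive integers with D ≤ K - 1 and D ∣ K. Over F₂, consider K messages x₁,…,x_K (indices taken modulo K) and the K - D code symbols c_{i,j} = x_{i+(j-1)D} + x_{i+jD} for i = 1,…,D and j = 1,…,K/D - 1. Then for every k, the message x_k is determined by the code symbols together with the side information {x_{k+1}, x_{k+2}, …, x_{k+D}} (indices mod K). Formally: if two message vectors x, x' : Fin K → F₂ agree on positions k+1,…,k+D (mod K) and produce the same values of all code symbols, then x_k = x'_k. -/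
/-- decodability of the code `x_{i+(j-1)D} + x_{i+jD}` when `D ∣ K`,
for receiver `R_k` with one-sided adjacent antidotes `{x_{k+1},…,x_{k+D}}` (indices mod K). -/
theorem stmt_0 (K D : ℕ) [NeZero K] (hD : 0 < D) (hDK : D ≤ K - 1) (hdvd : D ∣ K)
    (k : ZMod K) (x x' : ZMod K → ZMod 2)
    (hside : ∀ j ∈ Finset.Icc 1 D, x (k + (j : ℕ)) = x' (k + (j : ℕ)))
    (hcode : ∀ i ∈ Finset.Icc 1 D, ∀ j ∈ Finset.Icc 1 (K / D - 1),
      x ((i + (j - 1) * D : ℕ) : ZMod K) + x ((i + j * D : ℕ) : ZMod K)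
        = x' ((i + (j - 1) * D : ℕ) : ZMod K) + x' ((i + j * D : ℕ) : ZMod K)) :
    x k = x' k := by
  have hKpos : 0 < K := Nat.pos_of_ne_zero (NeZero.ne K)
  obtain ⟨N, hKN⟩ := hdvd
  have hND : K / D = N := by rw [hKN]; exact Nat.mul_div_cancel_left N hD
  rw [hND] at hcode
  have hN2 : 2 ≤ N := by
    rcases N with _ | _ | n
    · simp at hKN; omega
    · simp at hKN; omega
    · omega
  have key : ∀ a b c d : ZMod 2, a + b = c + d → a + c = b + d := by decide
  have keyz : ∀ a b : ZMod 2, a + b = 0 → a = b := by decide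
  have keyz2 : ∀ a : ZMod 2, a + a = 0 := by decide
  have hvalcast : ((k.val : ℕ) : ZMod K) = k := ZMod.natCast_rightInverse k
  have hvlt : k.val < K := ZMod.val_lt k
  have hmod := Nat.div_add_mod k.val D
  obtain ⟨i, t, hi1, hi2, ht, hk⟩ :
      ∃ i t : ℕ, 1 ≤ i ∧ i ≤ D ∧ t ≤ N - 1 ∧ ((i + t * D : ℕ) : ZMod K) = k := by
    rcases Nat.eq_zero_or_pos (k.val % D) with hr | hr
    · rcases Nat.eq_zero_or_pos (k.val / D) with hq | hq
      · refine ⟨D, N - 1, hD, le_refl D, le_refl _, ?_⟩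
        have hk0 : k.val = 0 := by rw [← hmod, hq, hr, Nat.mul_zero]
        obtain ⟨n, hn⟩ : ∃ n, N = n + 2 := ⟨N - 2, by omega⟩
        have hsum : D + (N - 1) * D = K := by
          rw [hKN, hn]
          have h1 : n + 2 - 1 = n + 1 := by omega
          rw [h1]; ring
        rw [hsum, ← hvalcast, hk0]
        simp
      · set q := k.val / D with hqdef
        have hqval : D * q ≤ k.val := by omega
        have hqN : q < N := by
          have h1 : D * q < D * N := by
            calc D * q ≤ k.val := hqval
            _ < K := hvlt
            _ = D * N := hKN
          exact Nat.lt_of_mul_lt_mul_left h1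
        refine ⟨D, q - 1, hD, le_refl D, by omega, ?_⟩
        obtain ⟨m, hm⟩ : ∃ m, q = m + 1 := ⟨q - 1, by omega⟩
        have heq : D + (q - 1) * D = k.val := by
          rw [hm]
          have h1 : m + 1 - 1 = m := rfl
          rw [h1]
          have h2 : D + m * D = D * (m + 1) := by ring
          rw [h2, ← hm]
          omega
        rw [heq, hvalcast]
    · set q := k.val / D with hqdef
      set r := k.val % D with hrdef
      have hrD : r < D := Nat.mod_lt _ hD
      have hqN : q < N := by
        have h1 : D * q < D * N := by
          calc D * q ≤ k.val := by omega
          _ < K := hvlt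
          _ = D * N := hKN
        exact Nat.lt_of_mul_lt_mul_left h1
      refine ⟨r, q, hr, le_of_lt hrD, by omega, ?_⟩
      have heq : r + q * D = k.val := by rw [Nat.mul_comm]; omega
      rw [heq, hvalcast]
  have key2 : ∀ m, m ≤ N - 1 →
      x ((i + m * D : ℕ) : ZMod K) + x' ((i + m * D : ℕ) : ZMod K)
        = x ((i : ℕ) : ZMod K) + x' ((i : ℕ) : ZMod K) := by
    intro m
    induction m with
    | zero => intro _; simp
    | succ m ih =>
      intro hm
      have hc := hcode i (Finset.mem_Icc.mpr ⟨hi1, hi2⟩) (m + 1)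
        (Finset.mem_Icc.mpr ⟨Nat.le_add_left 1 m, hm⟩)
      simp only [Nat.add_sub_cancel] at hc
      rw [← ih (by omega)]
      exact (key _ _ _ _ hc).symm
  have hfk : x k + x' k = x ((i : ℕ) : ZMod K) + x' ((i : ℕ) : ZMod K) := by
    rw [← hk]; exact key2 t ht
  have hkD : k + (D : ℕ) = ((i + (t + 1) * D : ℕ) : ZMod K) := by
    rw [← hk]; push_cast; ring
  have hfkD : x (k + (D : ℕ)) + x' (k + (D : ℕ))
      = x ((i : ℕ) : ZMod K) + x' ((i : ℕ) : ZMod K) := by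
    rcases Nat.lt_or_ge (t + 1) N with h | h
    · rw [hkD]; exact key2 (t + 1) (by omega)
    · have ht1 : t + 1 = N := by omega
      have hcast : ((i + (t + 1) * D : ℕ) : ZMod K) = ((i : ℕ) : ZMod K) := by
        rw [ht1]
        have hz : (((N * D : ℕ)) : ZMod K) = 0 := by
          rw [Nat.mul_comm, ← hKN]; exact ZMod.natCast_self K
        push_cast at hz ⊢
        rw [hz]; ring
      rw [hkD, hcast]
  have hside' : x (k + (D : ℕ)) = x' (k + (D : ℕ)) :=
    hside D (Finset.mem_Icc.mpr ⟨hD, le_refl D⟩)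
  have hzero : x ((i : ℕ) : ZMod K) + x' ((i : ℕ) : ZMod K) = 0 := by
    rw [← hfkD, hside']; exact keyz2 _
  apply keyz
  rw [hfk, hzero]
end

section
/- Let K, D be positive integers with (K - D) ∣ K and K - D ≥ 1. Set m = K - D and n = K/(K-D). Over F₂, with K messages indexed cyclically by Fin K, define the m code symbols c_i = x_i + x_{i+m} + x_{i+2m} + ⋯ + x_{i+(n-1)m} for i = 1,…,m. Then for every k, if two message vectors agree on positions {k+1, …, k+D} (mod K) and give the same values of all m code symbols, they agree at position k. In particular this index code has length K - D. -/
/-- decodability of the code `c_i = x_i + x_{i+m} + ⋯ + x_{i+(n-1)m}`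
(`m = K - D`, `n = K/(K-D)`), for receiver `R_k` with antidotes `{x_{k+1},…,x_{k+D}}`;
in particular the code has length `K - D`. -/
theorem stmt_1 (K D : ℕ) [NeZero K] (hD : 0 < D) (hm : 0 < K - D) (hdvd : (K - D) ∣ K)
    (k : ZMod K) (x x' : ZMod K → ZMod 2)
    (hside : ∀ j ∈ Finset.Icc 1 D, x (k + (j : ℕ)) = x' (k + (j : ℕ)))
    (hcode : ∀ i ∈ Finset.Icc 1 (K - D),
      ∑ t ∈ Finset.range (K / (K - D)), x ((i + t * (K - D) : ℕ) : ZMod K)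
        = ∑ t ∈ Finset.range (K / (K - D)), x' ((i + t * (K - D) : ℕ) : ZMod K)) :
    x k = x' k ∧ (Finset.Icc 1 (K - D)).card = K - D := by
  refine ⟨?_, by simp [Nat.card_Icc]⟩
  have hKm : K - D ≤ K := Nat.sub_le _ _
  obtain ⟨m, hmdef⟩ : ∃ m, m = K - D := ⟨_, rfl⟩
  obtain ⟨n, hndef⟩ : ∃ n, n = K / (K - D) := ⟨_, rfl⟩
  have hm' : 0 < m := hmdef ▸ hm
  have hnm : n * m = K := by rw [hndef, hmdef]; exact Nat.div_mul_cancel hdvd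
  have hn1 : 1 ≤ n := by
    rcases Nat.eq_zero_or_pos n with h0 | h1
    · exfalso; rw [h0, zero_mul] at hnm; exact (NeZero.ne K) hnm.symm
    · exact h1
  have hnn : (n - 1) * m = K - m := by
    have : (n - 1) * m + m = n * m := by
      calc (n - 1) * m + m = (n - 1 + 1) * m := by rw [add_mul, one_mul]
        _ = n * m := by rw [Nat.sub_add_cancel hn1]
    omega
  have hDm : D = K - m := by omega
  have hkv : k.val < K := k.val_lt
  obtain ⟨N, hNk, hN1, hNK⟩ : ∃ N : ℕ, (N : ZMod K) = k ∧ 1 ≤ N ∧ N ≤ K := by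
    by_cases h : k.val = 0
    · refine ⟨K, ?_, ?_, le_refl K⟩
      · have hk0 : k = 0 := by
          rw [show k = (k.val : ZMod K) from (ZMod.natCast_rightInverse k).symm, h]
          simp
        simp [ZMod.natCast_self, hk0]
      · exact Nat.pos_of_ne_zero (NeZero.ne K)
    · exact ⟨k.val, ZMod.natCast_rightInverse k, by omega, by omega⟩
  obtain ⟨t₀, i, hi1, him, ht₀n, hit⟩ :
      ∃ t₀ i, 1 ≤ i ∧ i ≤ m ∧ t₀ < n ∧ i + t₀ * m = N := by
    refine ⟨(N - 1) / m, (N - 1) % m + 1, by omega, ?_, ?_, ?_⟩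
    · have := Nat.mod_lt (N - 1) hm'
      omega
    · apply Nat.div_lt_of_lt_mul
      rw [Nat.mul_comm]
      omega
    · have h1 := Nat.mod_add_div (N - 1) m
      have h2 : ((N - 1) / m) * m = m * ((N - 1) / m) := Nat.mul_comm _ _
      omega
  have hi : i ∈ Finset.Icc 1 m := Finset.mem_Icc.mpr ⟨hi1, him⟩
  have ht₀ : t₀ ∈ Finset.range n := Finset.mem_range.mpr ht₀n
  have hother : ∀ t ∈ Finset.range n, t ≠ t₀ →
      x ((i + t * m : ℕ) : ZMod K) = x' ((i + t * m : ℕ) : ZMod K) := by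
    intro t ht hne
    have htn : t < n := Finset.mem_range.mp ht
    rcases lt_or_gt_of_ne hne with hlt | hgt
    · -- t < t₀ : use j = K - (t₀ - t) * m
      obtain ⟨s, hs⟩ : ∃ s, t₀ = t + s := ⟨t₀ - t, by omega⟩
      have hs1 : 1 ≤ s := by omega
      have hsm : t₀ * m = t * m + s * m := by rw [hs, add_mul]
      have hsn : s * m ≤ (n - 1) * m := Nat.mul_le_mul_right m (by omega)
      have hsm1 : m ≤ s * m := by
        calc m = 1 * m := (one_mul m).symm
          _ ≤ s * m := Nat.mul_le_mul_right m hs1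
      have hj : (K - s * m) ∈ Finset.Icc 1 D := Finset.mem_Icc.mpr (by omega)
      have hnat : i + t * m + K = N + (K - s * m) := by omega
      have hcast : ((i + t * m : ℕ) : ZMod K) = k + ((K - s * m : ℕ) : ZMod K) := by
        have h := congrArg (fun a : ℕ => (a : ZMod K)) hnat
        push_cast at h
        rw [ZMod.natCast_self] at h
        rw [← hNk]
        push_cast
        linear_combination h
      rw [hcast]
      exact hside _ hj
    · -- t > t₀ : use j = (t - t₀) * m
      obtain ⟨s, hs⟩ : ∃ s, t = t₀ + s := ⟨t - t₀, by omega⟩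
      have hs1 : 1 ≤ s := by omega
      have hsm : t * m = t₀ * m + s * m := by rw [hs, add_mul]
      have hsn : s * m ≤ (n - 1) * m := Nat.mul_le_mul_right m (by omega)
      have hsm1 : m ≤ s * m := by
        calc m = 1 * m := (one_mul m).symm
          _ ≤ s * m := Nat.mul_le_mul_right m hs1
      have hj : (s * m) ∈ Finset.Icc 1 D := Finset.mem_Icc.mpr (by omega)
      have hnat : i + t * m = N + s * m := by omega
      have hcast : ((i + t * m : ℕ) : ZMod K) = k + ((s * m : ℕ) : ZMod K) := by
        rw [hnat, ← hNk]
        push_cast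
        ring
      rw [hcast]
      exact hside _ hj
  have hc := hcode i (by rwa [← hmdef])
  rw [← hndef, ← hmdef] at hc
  rw [← Finset.add_sum_erase _ _ ht₀,
      ← Finset.add_sum_erase _ (fun t => x' ((i + t * m : ℕ) : ZMod K)) ht₀] at hc
  have hsum : ∑ t ∈ (Finset.range n).erase t₀, x ((i + t * m : ℕ) : ZMod K)
      = ∑ t ∈ (Finset.range n).erase t₀, x' ((i + t * m : ℕ) : ZMod K) :=
    Finset.sum_congr rfl fun t ht =>
      hother t (Finset.mem_of_mem_erase ht) (Finset.ne_of_mem_erase ht)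
  rw [hsum] at hc
  have hfin := add_right_cancel hc
  rwa [show ((i + t₀ * m : ℕ) : ZMod K) = k by rw [hit, hNk]] at hfin
end

section
/- Let K, D, λ be positive integers with λ ∣ D, D ∣ (K - λ), and n := (K-λ)/D > 1. Over F₂ with K cyclically indexed messages, define the code symbols: (a) c_{i,j} = x_{i+(j-1)D} + x_{i+jD} for i = 1,…,D, j = 1,…,n-1; and (b) d_{r,t} = x_{K-λ+r} + x_{K-λ+r-λ} + ⋯ + x_{K-λ+r-tλ} for r = 1,…,λ and t = 1,…,D/λ. Then every receiver R_k with adjacent one-sided antidotes {x_{k+1},…,x_{k+D}} (mod K) can decode x_k from these code symbols. -/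
/-- with `L ∣ D`, `D ∣ (K - L)`, `n = (K-L)/D > 1`, the code consisting of
(a) `x_{i+(j-1)D} + x_{i+jD}` for `i = 1,…,D`, `j = 1,…,n-1`, and
(b) `x_{K-L+r} + x_{K-L+r-L} + ⋯ + x_{K-L+r-tL}` for `r = 1,…,L`, `t = 1,…,D/L`,
lets receiver `R_k` with antidotes `{x_{k+1},…,x_{k+D}}` decode `x_k`. -/
theorem stmt_3 (K D L : ℕ) [NeZero K] (hD : 0 < D) (hL : 0 < L)
    (hLD : L ∣ D) (hdvd : D ∣ (K - L)) (hn : 1 < (K - L) / D)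
    (k : ZMod K) (x x' : ZMod K → ZMod 2)
    (hside : ∀ j ∈ Finset.Icc 1 D, x (k + (j : ℕ)) = x' (k + (j : ℕ)))
    (hcodeA : ∀ i ∈ Finset.Icc 1 D, ∀ j ∈ Finset.Icc 1 ((K - L) / D - 1),
      x ((i + (j - 1) * D : ℕ) : ZMod K) + x ((i + j * D : ℕ) : ZMod K)
        = x' ((i + (j - 1) * D : ℕ) : ZMod K) + x' ((i + j * D : ℕ) : ZMod K))
    (hcodeB : ∀ r ∈ Finset.Icc 1 L, ∀ t ∈ Finset.Icc 1 (D / L),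
      ∑ s ∈ Finset.range (t + 1), x ((K - L + r - s * L : ℕ) : ZMod K)
        = ∑ s ∈ Finset.range (t + 1), x' ((K - L + r - s * L : ℕ) : ZMod K)) :
    x k = x' k := by
  classical
  -- helpers over ZMod 2
  have key0 : ∀ a b : ZMod 2, a + b = 0 → a = b := by decide
  have keyself : ∀ a : ZMod 2, a + a = 0 := by decide
  have key2 : ∀ a b a' b' : ZMod 2, a + b = a' + b' → a + a' = b + b' := by decide
  set y : ZMod K → ZMod 2 := fun p => x p + x' p with hy
  have hyval : ∀ p, y p = x p + x' p := fun _ => rfl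
  obtain ⟨c, hc⟩ := hLD
  set m := K - L with hmdef
  set n := m / D with hndef
  have hmd : m = n * D := (Nat.div_mul_cancel hdvd).symm
  have hn2 : 2 ≤ n := hn
  have hc0 : 0 < c := by
    rcases Nat.eq_zero_or_pos c with h | h
    · subst h; simp at hc; omega
    · exact h
  have hLleD : L ≤ D := by
    calc L = L * 1 := (Nat.mul_one L).symm
    _ ≤ L * c := Nat.mul_le_mul_left L hc0
    _ = D := hc.symm
  have hDm : 2 * D ≤ m := by
    calc 2 * D ≤ n * D := Nat.mul_le_mul_right D hn2
    _ = m := hmd.symm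
  have hK : K = m + L := by omega
  have hDLc : D / L = c := by rw [hc, Nat.mul_div_cancel_left _ hL]
  have hnd' : (n - 1) * D + D = m := by
    have hn1 : n - 1 + 1 = n := by omega
    calc (n - 1) * D + D = ((n - 1) + 1) * D := (Nat.succ_mul _ _).symm
    _ = n * D := by rw [hn1]
    _ = m := hmd.symm
  set k0 := k.val with hk0def
  have hkk : ((k0 : ℕ) : ZMod K) = k := ZMod.natCast_rightInverse k
  have hk0K : k0 < K := ZMod.val_lt k
  -- side information in terms of y
  have hyside : ∀ j, 1 ≤ j → j ≤ D → y ((k0 + j : ℕ) : ZMod K) = 0 := by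
    intro j h1 h2
    have h := hside j (Finset.mem_Icc.mpr ⟨h1, h2⟩)
    have hcast : ((k0 + j : ℕ) : ZMod K) = k + (j : ℕ) := by
      rw [Nat.cast_add, hkk]
    rw [hcast, hyval, h]
    exact keyself _
  -- code A in terms of y
  have hA : ∀ i, 1 ≤ i → i ≤ D → ∀ j, 1 ≤ j → j ≤ n - 1 →
      y ((i + (j - 1) * D : ℕ) : ZMod K) = y ((i + j * D : ℕ) : ZMod K) := by
    intro i hi1 hi2 j hj1 hj2
    have h := hcodeA i (Finset.mem_Icc.mpr ⟨hi1, hi2⟩) j (Finset.mem_Icc.mpr ⟨hj1, hj2⟩)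
    exact key2 _ _ _ _ h
  -- iterated code A
  have hchain : ∀ i, 1 ≤ i → i ≤ D → ∀ j, j ≤ n - 1 →
      y ((i + j * D : ℕ) : ZMod K) = y ((i : ℕ) : ZMod K) := by
    intro i hi1 hi2 j
    induction j with
    | zero => intro _; norm_num
    | succ j ih =>
      intro hj
      have h1 := hA i hi1 hi2 (j + 1) (by omega) hj
      have h2 : (j + 1) - 1 = j := rfl
      rw [h2] at h1
      rw [← h1]
      exact ih (by omega)
  -- code B sums in terms of y
  have hBzero : ∀ r, 1 ≤ r → r ≤ L → ∀ t, 1 ≤ t → t ≤ D / L →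
      ∑ s ∈ Finset.range (t + 1), y ((m + r - s * L : ℕ) : ZMod K) = 0 := by
    intro r hr1 hr2 t ht1 ht2
    have h := hcodeB r (Finset.mem_Icc.mpr ⟨hr1, hr2⟩) t (Finset.mem_Icc.mpr ⟨ht1, ht2⟩)
    simp only [hyval]
    rw [Finset.sum_add_distrib, h]
    exact keyself _
  have hB1 : ∀ r, 1 ≤ r → r ≤ L →
      y ((m + r : ℕ) : ZMod K) = y ((m + r - L : ℕ) : ZMod K) := by
    intro r hr1 hr2
    have h := hBzero r hr1 hr2 1 le_rfl (by rw [hDLc]; omega)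
    rw [Finset.sum_range_succ, Finset.sum_range_one] at h
    simp only [Nat.zero_mul, Nat.sub_zero, Nat.one_mul] at h
    exact key0 _ _ h
  have hB2 : ∀ r, 1 ≤ r → r ≤ L → ∀ t, 2 ≤ t → t ≤ D / L →
      y ((m + r - t * L : ℕ) : ZMod K) = 0 := by
    intro r hr1 hr2 t ht1 ht2
    have h := hBzero r hr1 hr2 t (by omega) ht2
    rw [Finset.sum_range_succ] at h
    have h' := hBzero r hr1 hr2 (t - 1) (by omega) (by omega)
    have he : t - 1 + 1 = t := by omega
    rw [he] at h'
    rw [h'] at h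
    simpa using h
  -- decoding of the tail positions m+1, …, m+L
  have hmain : ∀ s, 1 ≤ s → s ≤ L →
      y ((m + s : ℕ) : ZMod K) = y ((D - L + s : ℕ) : ZMod K) := by
    intro s hs1 hs2
    have h1 := hB1 s hs1 hs2
    have hgen4 : ∀ P, P + D = m → (D - L + s) + P = m + s - L := by
      intro P hP; omega
    have e := hgen4 _ hnd'
    have h2 := hchain (D - L + s) (by omega) (by omega) (n - 1) le_rfl
    rw [e] at h2
    rw [h1]
    exact h2
  -- reduce goal to y k = 0
  suffices hgoal : y ((k0 : ℕ) : ZMod K) = 0 by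
    rw [hkk] at hgoal
    exact key0 _ _ hgoal
  by_cases hc1 : 1 ≤ k0 ∧ k0 ≤ m - D
  · -- k0 in [1, m-D]
    obtain ⟨a, b, hab, haD⟩ : ∃ a b, (k0 - 1 : ℕ) = b * D + a ∧ a < D :=
      ⟨(k0 - 1) % D, (k0 - 1) / D,
        by rw [Nat.mul_comm]; exact (Nat.div_add_mod (k0 - 1) D).symm,
        Nat.mod_lt _ hD⟩
    have he1 : (k0 - 1) + 1 = k0 := by omega
    have he2 : k0 + D ≤ m := by omega
    have hblt : b * D < (n - 1) * D := by linarith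
    have hbn : b < n - 1 := by
      rw [Nat.mul_comm b D, Nat.mul_comm (n - 1) D] at hblt
      exact Nat.lt_of_mul_lt_mul_left hblt
    have hk0' : k0 = (a + 1) + b * D := by linarith
    have h1 := hchain (a + 1) (by omega) (by omega) b (by omega)
    have h2 := hchain (a + 1) (by omega) (by omega) (b + 1) (by omega)
    have hs : (b + 1) * D = b * D + D := Nat.succ_mul b D
    have h3 : (a + 1) + (b + 1) * D = k0 + D := by linarith
    rw [h3] at h2
    rw [hk0', h1, ← h2]
    exact hyside D (by omega) le_rfl
  by_cases hc2 : m - D + 1 ≤ k0 ∧ k0 ≤ m - L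
  · -- k0 in [m-D+1, m-L]
    obtain ⟨a, b, hab, haL⟩ : ∃ a b, (m - k0 : ℕ) = b * L + a ∧ a < L :=
      ⟨(m - k0) % L, (m - k0) / L,
        by rw [Nat.mul_comm]; exact (Nat.div_add_mod (m - k0) L).symm,
        Nat.mod_lt _ hL⟩
    have hb1 : 1 ≤ b := by
      rcases Nat.eq_zero_or_pos b with h | h
      · subst h; simp at hab; omega
      · exact h
    have hblt : b * L < c * L := by
      have hdD : m - k0 < D := by omega
      have hDc : D = c * L := by rw [hc, Nat.mul_comm]
      linarith
    have hbc : b < c := by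
      rw [Nat.mul_comm b L, Nat.mul_comm c L] at hblt
      exact Nat.lt_of_mul_lt_mul_left hblt
    have h := hB2 (L - a) (by omega) (by omega) (b + 1) (by omega) (by rw [hDLc]; omega)
    have hgen : ∀ P, (m - k0 : ℕ) = P + a → m + (L - a) - (P + L) = k0 := by
      intro P hP; omega
    have hpos : m + (L - a) - (b + 1) * L = k0 := by
      rw [Nat.succ_mul]
      exact hgen (b * L) hab
    rw [← hpos]
    exact h
  by_cases hc3 : m - L + 1 ≤ k0 ∧ k0 ≤ m
  · -- k0 in [m-L+1, m]
    have h := hB1 (k0 + L - m) (by omega) (by omega)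
    have e1 : m + (k0 + L - m) - L = k0 := by omega
    have e2 : m + (k0 + L - m) = k0 + L := by omega
    rw [e1, e2] at h
    rw [← h]
    exact hyside L (by omega) hLleD
  · -- k0 = 0 or k0 in [m+1, m+L-1]
    have hrange : k0 = 0 ∨ (m + 1 ≤ k0 ∧ k0 ≤ m + L - 1) := by omega
    rcases hrange with h0 | ⟨hr1, hr2⟩
    · calc y ((k0 : ℕ) : ZMod K) = y ((m + L : ℕ) : ZMod K) := by
            rw [h0, ← hK]; simp
      _ = y ((D - L + L : ℕ) : ZMod K) := hmain L (by omega) le_rfl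
      _ = y ((k0 + D : ℕ) : ZMod K) := by
            rw [h0, show D - L + L = 0 + D from by omega]
      _ = 0 := hyside D (by omega) le_rfl
    · calc y ((k0 : ℕ) : ZMod K) = y ((m + (k0 - m) : ℕ) : ZMod K) := by
            rw [show m + (k0 - m) = k0 from by omega]
      _ = y ((D - L + (k0 - m) : ℕ) : ZMod K) := hmain _ (by omega) (by omega)
      _ = y ((k0 + D : ℕ) : ZMod K) := by
            have hcst : (((D - L + (k0 - m)) + K : ℕ) : ZMod K)
                = ((D - L + (k0 - m) : ℕ) : ZMod K) := by
              rw [Nat.cast_add, ZMod.natCast_self, add_zero]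
            rw [show (k0 + D : ℕ) = (D - L + (k0 - m)) + K from by omega, hcst]
      _ = 0 := hyside D (by omega) le_rfl
end

section
/- Let K, D, U be nonnegative integers with U ≤ D, K ≥ 1, D ≤ K - 1. Suppose C = (t₁,…,t_l) is an F₂-linear index code of length l for the cyclic one-sided problem with K messages y₁,…,y_K in which receiver R_k has antidotes {y_{k+1},…,y_{k+D-U}} and, moreover, each receiver decodes via a sum of code symbols of the form S_k = y_k + y_{k+a_{k,1}} + ⋯ + y_{k+a_{k,d_k}} with 1 ≤ a_{k,1} < ⋯ < a_{k,d_k} ≤ D - U. Consider the two-sided problem with K vector messages x̄_k = (x_{k,1},…,x_{k,U+1}) ∈ F₂^{U+1}, where receiver R_k has antidotes {x̄_{k-U},…,x̄_{k-1}} ∪ {x̄_{k+1},…,x̄_{k+D}} (indices mod K). Define the code C^{(U+1)} by substituting y_k ↦ Σ_{i=1}^{U+1} x_{k+1-i, i} in each code symbol of C. Then every receiver R_k can decode all U+1 of its demanded symbols x_{k,1},…,x_{k,U+1} from the code symbols of C^{(U+1)} together with its two-sided antidotes. -/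
/-- Theorem 1 of the paper: if the scalar linear code
`C = (t₁,…,t_l)` for the one-sided problem (antidotes `{y_{k+1},…,y_{k+D-U}}`)
decodes each `y_k` via a sum of code symbols of the form
`S_k = y_k + y_{k+a_{k,1}} + ⋯ + y_{k+a_{k,d_k}}` with `1 ≤ a_{k,1} < ⋯ < a_{k,d_k} ≤ D-U`,
then the substituted code `C^{(U+1)}` (substituting `y_k ↦ Σ_{i=1}^{U+1} x_{k+1-i,i}`)
lets every receiver of the two-sided problem with antidotes
`{x̄_{k-U},…,x̄_{k-1}} ∪ {x̄_{k+1},…,x̄_{k+D}}` decode all `U+1` of its demanded symbols. -/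
theorem stmt_4 (K D U : ℕ) [NeZero K] (hU : U ≤ D) (hK : 1 ≤ K) (hDK : D ≤ K - 1)
    (l : ℕ) (t : Fin l → ZMod K → ZMod 2)
    (hdec : ∀ k : ZMod K, ∃ (T : Finset (Fin l)) (d : ℕ) (a : Fin d → ℕ),
      StrictMono a ∧ (∀ i, 1 ≤ a i ∧ a i ≤ D - U) ∧
      ∀ y : ZMod K → ZMod 2,
        ∑ j ∈ T, ∑ m : ZMod K, t j m * y m = y k + ∑ i, y (k + (a i : ℕ)))
    (k : ZMod K) (x x' : ZMod K → ℕ → ZMod 2)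
    (hside : ∀ m : ZMod K,
      ((∃ u ∈ Finset.Icc 1 U, m = k - (u : ℕ)) ∨
        (∃ v ∈ Finset.Icc 1 D, m = k + (v : ℕ))) →
      ∀ i, x m i = x' m i)
    (hcode : ∀ j : Fin l,
      ∑ m : ZMod K, t j m * ∑ i ∈ Finset.Icc 1 (U + 1), x (m + 1 - (i : ℕ)) i
        = ∑ m : ZMod K, t j m * ∑ i ∈ Finset.Icc 1 (U + 1), x' (m + 1 - (i : ℕ)) i) :
    ∀ i ∈ Finset.Icc 1 (U + 1), x k i = x' k i := by
  -- main step: decode x k i given all later symbols x k i' (i' > i) are decoded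
  have main : ∀ i : ℕ, 1 ≤ i → i ≤ U + 1 →
      (∀ i', i < i' → i' ≤ U + 1 → x k i' = x' k i') → x k i = x' k i := by
    intro i h1 h2 IH
    obtain ⟨T, d, a, hmono, hbd, h3⟩ := hdec (k + ((i - 1 : ℕ) : ZMod K))
    have hi1 : ((i - 1 : ℕ) : ZMod K) = (i : ZMod K) - 1 := by
      rw [Nat.cast_sub h1]; push_cast; ring
    have key := ((h3 (fun m => ∑ i' ∈ Finset.Icc 1 (U + 1), x (m + 1 - (i' : ℕ)) i')).symm.trans
      ((Finset.sum_congr rfl fun j _ => hcode j).trans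
        (h3 (fun m => ∑ i' ∈ Finset.Icc 1 (U + 1), x' (m + 1 - (i' : ℕ)) i'))))
    -- the cross terms (shifted by a j) agree
    have hcross : ∀ j : Fin d,
        (∑ i' ∈ Finset.Icc 1 (U + 1),
          x (k + ((i - 1 : ℕ) : ZMod K) + ((a j : ℕ) : ZMod K) + 1 - (i' : ℕ)) i')
        = ∑ i' ∈ Finset.Icc 1 (U + 1),
          x' (k + ((i - 1 : ℕ) : ZMod K) + ((a j : ℕ) : ZMod K) + 1 - (i' : ℕ)) i' := by
      intro j
      refine Finset.sum_congr rfl fun i' hi' => ?_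
      rw [Finset.mem_Icc] at hi'
      obtain ⟨ha1, ha2⟩ := hbd j
      rcases lt_trichotomy i' (i + a j) with h | h | h
      · -- right-side antidote
        have e : k + ((i - 1 : ℕ) : ZMod K) + ((a j : ℕ) : ZMod K) + 1 - ((i' : ℕ) : ZMod K)
            = k + ((i + a j - i' : ℕ) : ZMod K) := by
          rw [hi1, Nat.cast_sub (by omega : i' ≤ i + a j)]; push_cast; ring
        rw [e]
        exact hside _ (Or.inr ⟨i + a j - i', by rw [Finset.mem_Icc]; omega, rfl⟩) i'
      · -- the demanded symbol with larger index : use IH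
        have e : k + ((i - 1 : ℕ) : ZMod K) + ((a j : ℕ) : ZMod K) + 1 - ((i' : ℕ) : ZMod K)
            = k := by
          rw [hi1, h]; push_cast; ring
        rw [e]
        exact IH i' (by omega) hi'.2
      · -- left-side antidote
        have e : k + ((i - 1 : ℕ) : ZMod K) + ((a j : ℕ) : ZMod K) + 1 - ((i' : ℕ) : ZMod K)
            = k - ((i' - (i + a j) : ℕ) : ZMod K) := by
          rw [hi1, Nat.cast_sub (by omega : i + a j ≤ i')]; push_cast; ring
        rw [e]
        exact hside _ (Or.inl ⟨i' - (i + a j), by rw [Finset.mem_Icc]; omega, rfl⟩) i'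
    rw [Fintype.sum_congr _ _ hcross] at key
    have key2 := add_right_cancel key
    -- now peel off the i-th term
    have hi_mem : i ∈ Finset.Icc 1 (U + 1) := by rw [Finset.mem_Icc]; omega
    rw [← Finset.add_sum_erase _ _ hi_mem, ← Finset.add_sum_erase _ _ hi_mem] at key2
    have hrest : (∑ i' ∈ (Finset.Icc 1 (U + 1)).erase i,
          x (k + ((i - 1 : ℕ) : ZMod K) + 1 - (i' : ℕ)) i')
        = ∑ i' ∈ (Finset.Icc 1 (U + 1)).erase i,
          x' (k + ((i - 1 : ℕ) : ZMod K) + 1 - (i' : ℕ)) i' := by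
      refine Finset.sum_congr rfl fun i' hi' => ?_
      rw [Finset.mem_erase, Finset.mem_Icc] at hi'
      rcases lt_or_gt_of_ne hi'.1 with h | h
      · -- i' < i : right-side antidote
        have e : k + ((i - 1 : ℕ) : ZMod K) + 1 - ((i' : ℕ) : ZMod K)
            = k + ((i - i' : ℕ) : ZMod K) := by
          rw [hi1, Nat.cast_sub (by omega : i' ≤ i)]; push_cast; ring
        rw [e]
        exact hside _ (Or.inr ⟨i - i', by rw [Finset.mem_Icc]; omega, rfl⟩) i'
      · -- i' > i : left-side antidote
        have e : k + ((i - 1 : ℕ) : ZMod K) + 1 - ((i' : ℕ) : ZMod K)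
            = k - ((i' - i : ℕ) : ZMod K) := by
          rw [hi1, Nat.cast_sub (by omega : i ≤ i')]; push_cast; ring
        rw [e]
        exact hside _ (Or.inl ⟨i' - i, by rw [Finset.mem_Icc]; omega, rfl⟩) i'
    rw [hrest] at key2
    have key3 := add_right_cancel key2
    have e : k + ((i - 1 : ℕ) : ZMod K) + 1 - ((i : ℕ) : ZMod K) = k := by
      rw [hi1]; ring
    rwa [e] at key3
  -- downward induction
  have H : ∀ n : ℕ, ∀ i, 1 ≤ i → i ≤ U + 1 → U + 1 - i ≤ n → x k i = x' k i := by
    intro n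
    induction n with
    | zero =>
      intro i h1 h2 h3
      exact main i h1 h2 (fun i' h h' => absurd h (by omega))
    | succ n ih =>
      intro i h1 h2 h3
      exact main i h1 h2 (fun i' hlt hle => ih i' (by omega) hle (by omega))
  intro i hi
  rw [Finset.mem_Icc] at hi
  exact H (U + 1) i hi.1 hi.2 (by omega)
end

section
/- Decoding step for the highest-index symbol: with notation as in the substitution construction (y_k = Σ_{i=1}^{U+1} x_{k+1-i,i}, indices mod K), suppose receiver R_k has antidotes {x̄_{k-U},…,x̄_{k-1}} ∪ {x̄_{k+1},…,x̄_{k+D}} and the sum S_{k+U}^{(U+1)} = Σ_{i=1}^{U+1} x_{k+U+1-i,i} + Σ_{j=1}^{d} Σ_{i=1}^{U+1} x_{k+U+a_j+1-i, i} is available, where 1 ≤ a_1 < ⋯ < a_d ≤ D - U. Then exactly one term of S_{k+U}^{(U+1)} is a symbol demanded by R_k, namely x_{k,U+1}, and every other term lies in the antidote set of R_k; hence R_k recovers x_{k,U+1}. -/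
/-- `m` is an antidote index for receiver `R_k`:
`m ∈ {k-U,…,k-1} ∪ {k+1,…,k+D}` (indices mod `K`). -/
def isAntidote (K U D : ℕ) (k m : ZMod K) : Prop :=
  (∃ u ∈ Finset.Icc 1 U, m = k - (u : ℕ)) ∨ (∃ v ∈ Finset.Icc 1 D, m = k + (v : ℕ))

/-- in the sum `S_{k+U}^{(U+1)} = Σ_i x_{k+U+1-i,i} + Σ_j Σ_i x_{k+U+a_j+1-i,i}`,
exactly one summand is demanded by `R_k`, namely `x_{k,U+1}`; every other summand is an
antidote symbol of `R_k`; hence `R_k` recovers `x_{k,U+1}`. -/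
theorem stmt_5 (K D U : ℕ) [NeZero K] (hU : U ≤ D) (hDU : 1 ≤ D - U)
    (hKbound : U + D ≤ K - 1) (hK : 1 ≤ K)
    (d : ℕ) (a : Fin d → ℕ) (ha : StrictMono a)
    (hrange : ∀ j, 1 ≤ a j ∧ a j ≤ D - U) (k : ZMod K) :
    -- the only demanded summand is x_{k,U+1}, coming from the first group with i = U+1
    (∀ i ∈ Finset.Icc 1 (U + 1), ((k + (U : ℕ) + 1 - (i : ℕ) : ZMod K) = k ↔ i = U + 1))
    ∧ (∀ j : Fin d, ∀ i ∈ Finset.Icc 1 (U + 1),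
        (k + (U : ℕ) + (a j : ℕ) + 1 - (i : ℕ) : ZMod K) ≠ k)
    -- every other summand lies in the antidote set of R_k
    ∧ (∀ i ∈ Finset.Icc 1 (U + 1), i ≠ U + 1 →
        isAntidote K U D k (k + (U : ℕ) + 1 - (i : ℕ)))
    ∧ (∀ j : Fin d, ∀ i ∈ Finset.Icc 1 (U + 1),
        isAntidote K U D k (k + (U : ℕ) + (a j : ℕ) + 1 - (i : ℕ)))
    -- hence R_k recovers x_{k,U+1}
    ∧ (∀ x x' : ZMod K → ℕ → ZMod 2,
        (∀ m : ZMod K, isAntidote K U D k m → ∀ i, x m i = x' m i) →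
        (∑ i ∈ Finset.Icc 1 (U + 1), x (k + (U : ℕ) + 1 - (i : ℕ)) i
            + ∑ j : Fin d, ∑ i ∈ Finset.Icc 1 (U + 1),
                x (k + (U : ℕ) + (a j : ℕ) + 1 - (i : ℕ)) i
          = ∑ i ∈ Finset.Icc 1 (U + 1), x' (k + (U : ℕ) + 1 - (i : ℕ)) i
            + ∑ j : Fin d, ∑ i ∈ Finset.Icc 1 (U + 1),
                x' (k + (U : ℕ) + (a j : ℕ) + 1 - (i : ℕ)) i) →
        x k (U + 1) = x' k (U + 1)) := by
  have hKD : D < K := by omega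
  have hzero : ∀ n : ℕ, n ≤ D → (((n : ZMod K) = 0) ↔ n = 0) := by
    intro n hn
    constructor
    · intro h
      have hd : K ∣ n := (ZMod.natCast_eq_zero_iff n K).mp h
      exact Nat.eq_zero_of_dvd_of_lt hd (by omega)
    · rintro rfl; simp
  have e1 : ∀ i : ℕ, i ≤ U + 1 →
      (k + (U : ℕ) + 1 - (i : ℕ) : ZMod K) = k + ((U + 1 - i : ℕ) : ZMod K) := by
    intro i hi
    push_cast [Nat.cast_sub hi]
    ring
  have e2 : ∀ (j : Fin d) (i : ℕ), i ≤ U + a j + 1 →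
      (k + (U : ℕ) + (a j : ℕ) + 1 - (i : ℕ) : ZMod K)
        = k + ((U + a j + 1 - i : ℕ) : ZMod K) := by
    intro j i hi
    push_cast [Nat.cast_sub hi]
    ring
  have p1 : ∀ i ∈ Finset.Icc 1 (U + 1),
      ((k + (U : ℕ) + 1 - (i : ℕ) : ZMod K) = k ↔ i = U + 1) := by
    intro i hi
    simp only [Finset.mem_Icc] at hi
    rw [e1 i hi.2, add_eq_left, hzero _ (by omega)]
    omega
  have p2 : ∀ j : Fin d, ∀ i ∈ Finset.Icc 1 (U + 1),
      (k + (U : ℕ) + (a j : ℕ) + 1 - (i : ℕ) : ZMod K) ≠ k := by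
    intro j i hi
    simp only [Finset.mem_Icc] at hi
    have hja := hrange j
    rw [e2 j i (by omega)]
    intro hcon
    rw [add_eq_left, hzero _ (by omega)] at hcon
    omega
  have p3 : ∀ i ∈ Finset.Icc 1 (U + 1), i ≠ U + 1 →
      isAntidote K U D k (k + (U : ℕ) + 1 - (i : ℕ)) := by
    intro i hi hne
    simp only [Finset.mem_Icc] at hi
    exact Or.inr ⟨U + 1 - i, Finset.mem_Icc.mpr ⟨by omega, by omega⟩, e1 i hi.2⟩
  have p4 : ∀ j : Fin d, ∀ i ∈ Finset.Icc 1 (U + 1),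
      isAntidote K U D k (k + (U : ℕ) + (a j : ℕ) + 1 - (i : ℕ)) := by
    intro j i hi
    simp only [Finset.mem_Icc] at hi
    have hja := hrange j
    exact Or.inr ⟨U + a j + 1 - i, Finset.mem_Icc.mpr ⟨by omega, by omega⟩,
      e2 j i (by omega)⟩
  refine ⟨p1, p2, p3, p4, ?_⟩
  intro x x' hant heq
  have hmem : U + 1 ∈ Finset.Icc 1 (U + 1) := Finset.mem_Icc.mpr ⟨by omega, le_rfl⟩
  rw [← Finset.add_sum_erase _ (fun i => x (k + (U : ℕ) + 1 - (i : ℕ)) i) hmem,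
      ← Finset.add_sum_erase _ (fun i => x' (k + (U : ℕ) + 1 - (i : ℕ)) i) hmem] at heq
  have hk0 : (k + (U : ℕ) + 1 - ((U + 1 : ℕ) : ZMod K)) = k := by push_cast; ring
  rw [hk0] at heq
  have h1 : ∑ i ∈ (Finset.Icc 1 (U + 1)).erase (U + 1),
      x (k + (U : ℕ) + 1 - (i : ℕ)) i
      = ∑ i ∈ (Finset.Icc 1 (U + 1)).erase (U + 1),
      x' (k + (U : ℕ) + 1 - (i : ℕ)) i := by
    refine Finset.sum_congr rfl fun i hi => ?_
    exact hant _ (p3 i (Finset.mem_of_mem_erase hi) (Finset.ne_of_mem_erase hi)) i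
  have h2 : ∑ j : Fin d, ∑ i ∈ Finset.Icc 1 (U + 1),
      x (k + (U : ℕ) + (a j : ℕ) + 1 - (i : ℕ)) i
      = ∑ j : Fin d, ∑ i ∈ Finset.Icc 1 (U + 1),
      x' (k + (U : ℕ) + (a j : ℕ) + 1 - (i : ℕ)) i := by
    refine Finset.sum_congr rfl fun j _ => Finset.sum_congr rfl fun i hi => ?_
    exact hant _ (p4 j i hi) i
  rw [h1, h2] at heq
  have := add_right_cancel heq
  exact add_right_cancel this
end

section
/- Vector-linear optimality from scalar optimality: let K, D, U satisfy 0 ≤ U, U + D ≤ K - 2, and Δ = D - U ≥ 1. Suppose there exists a decodable scalar linear index code of length K - Δ over F₂ for the one-sided cyclic problem (K messages, antidotes {y_{k+1},…,y_{k+Δ}}). Then the two-sided problem with antidotes {x̄_{k-U},…,x̄_{k-1}} ∪ {x̄_{k+1},…,x̄_{k+D}} admits a vector-linear index code of rate (U+1)/(K - D + U) symbols per message, i.e., a code broadcasting K - D + U binary symbols from which every receiver recovers its U+1 demanded binary symbols; this rate equals the capacity (U+1)/(K + U - D). -/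
/-- vector-linear optimality from scalar optimality: if the one-sided
cyclic problem with antidotes `{y_{k+1},…,y_{k+Δ}}`, `Δ = D - U ≥ 1`, admits a decodable
scalar linear code of length `K - Δ = K - D + U`, then the two-sided problem with
antidotes `{x̄_{k-U},…,x̄_{k-1}} ∪ {x̄_{k+1},…,x̄_{k+D}}` admits a vector-linear code
broadcasting `K - D + U` binary symbols from which every receiver recovers all `U+1`
of its demanded symbols; its rate `(U+1)/(K-D+U)` equals the capacity `(U+1)/(K+U-D)`. -/
theorem stmt_8 (K D U : ℕ) [NeZero K] (hU : U ≤ D) (hKD : U + D ≤ K - 2)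
    (hΔ : 1 ≤ D - U)
    (hscalar : ∃ t : Fin (K - D + U) → ZMod K → ZMod 2,
      ∀ (k : ZMod K) (y y' : ZMod K → ZMod 2),
        (∀ j ∈ Finset.Icc 1 (D - U), y (k + (j : ℕ)) = y' (k + (j : ℕ))) →
        (∀ c, ∑ m : ZMod K, t c m * y m = ∑ m : ZMod K, t c m * y' m) →
        y k = y' k) :
    (∃ s : Fin (K - D + U) → (ZMod K × Fin (U + 1)) → ZMod 2,
      ∀ (k : ZMod K) (x x' : ZMod K × Fin (U + 1) → ZMod 2),
        (∀ (m : ZMod K) (i : Fin (U + 1)),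
          ((∃ u ∈ Finset.Icc 1 U, m = k - (u : ℕ)) ∨
            (∃ v ∈ Finset.Icc 1 D, m = k + (v : ℕ))) →
          x (m, i) = x' (m, i)) →
        (∀ c, ∑ p : ZMod K × Fin (U + 1), s c p * x p
            = ∑ p : ZMod K × Fin (U + 1), s c p * x' p) →
        ∀ i : Fin (U + 1), x (k, i) = x' (k, i))
    ∧ ((U : ℚ) + 1) / ((K - D + U : ℕ) : ℚ) = ((U : ℚ) + 1) / ((K : ℚ) + U - D) := by
  obtain ⟨t, ht⟩ := hscalar
  constructor
  · refine ⟨fun c p => t c (p.1 - ((p.2 : ℕ) : ZMod K)), ?_⟩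
    intro k x x' hant hbc
    set Y : ((ZMod K × Fin (U + 1)) → ZMod 2) → ZMod K → ZMod 2 :=
      fun z m => ∑ i : Fin (U + 1), z (m + ((i : ℕ) : ZMod K), i) with hY
    have hsum : ∀ (c : Fin (K - D + U)) (z : (ZMod K × Fin (U + 1)) → ZMod 2),
        ∑ m : ZMod K, t c m * Y z m
          = ∑ p : ZMod K × Fin (U + 1), t c (p.1 - ((p.2 : ℕ) : ZMod K)) * z p := by
      intro c z
      rw [Fintype.sum_prod_type, Finset.sum_comm]
      simp only [hY, Finset.mul_sum]
      rw [Finset.sum_comm]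
      refine Finset.sum_congr rfl fun i _ => ?_
      refine Fintype.sum_equiv (Equiv.addRight (((i : ℕ) : ZMod K))) _ _ fun m => ?_
      simp [add_sub_cancel_right]
    have key : ∀ r : ℕ, r ≤ U → ∀ hr' : r < U + 1,
        x (k, ⟨r, hr'⟩) = x' (k, ⟨r, hr'⟩) := by
      intro r
      induction r using Nat.strong_induction_on with
      | _ r ih =>
        intro hr hr'
        have hdec : Y x (k - (r : ℕ)) = Y x' (k - (r : ℕ)) := by
          apply ht (k - (r : ℕ)) (Y x) (Y x')
          · intro j hj
            simp only [Finset.mem_Icc] at hj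
            simp only [hY]
            refine Finset.sum_congr rfl fun i _ => ?_
            have hi := i.isLt
            by_cases hcase : r ≤ j + (i : ℕ)
            · rcases Nat.eq_or_lt_of_le hcase with heq | hlt
              · -- j + i = r : this is the component i = r - j < r, use ih
                have hm : k - ((r : ℕ) : ZMod K) + ((j : ℕ) : ZMod K) + ((i : ℕ) : ZMod K)
                    = k := by
                  have : ((j : ℕ) : ZMod K) + ((i : ℕ) : ZMod K) = ((r : ℕ) : ZMod K) := by
                    rw [← Nat.cast_add, heq]
                  rw [← this]
                  ring
                rw [hm]
                have hlti : (i : ℕ) < r := by omega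
                have := ih (i : ℕ) hlti (by omega) hi
                simpa using this
              · -- offset v = j + i - r ∈ [1, D]
                apply hant
                right
                refine ⟨j + (i : ℕ) - r, Finset.mem_Icc.mpr ⟨by omega, by omega⟩, ?_⟩
                have : ((j + (i : ℕ) - r : ℕ) : ZMod K)
                    = ((j : ℕ) : ZMod K) + ((i : ℕ) : ZMod K) - ((r : ℕ) : ZMod K) := by
                  push_cast [Nat.cast_sub (by omega : r ≤ j + (i : ℕ))]
                  ring
                rw [this]
                ring
            · -- offset u = r - j - i ∈ [1, U]
              apply hant
              left
              refine ⟨r - (j + (i : ℕ)), Finset.mem_Icc.mpr ⟨by omega, by omega⟩, ?_⟩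
              have : ((r - (j + (i : ℕ)) : ℕ) : ZMod K)
                  = ((r : ℕ) : ZMod K) - (((j : ℕ) : ZMod K) + ((i : ℕ) : ZMod K)) := by
                push_cast [Nat.cast_sub (by omega : j + (i : ℕ) ≤ r)]
                ring
              rw [this]
              ring
          · intro c
            rw [hsum, hsum]
            exact hbc c
        -- extract component r from hdec
        have hYx : Y x (k - (r : ℕ)) = ∑ i : Fin (U + 1),
            x (k - ((r : ℕ) : ZMod K) + ((i : ℕ) : ZMod K), i) := rfl
        have hYx' : Y x' (k - (r : ℕ)) = ∑ i : Fin (U + 1),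
            x' (k - ((r : ℕ) : ZMod K) + ((i : ℕ) : ZMod K), i) := rfl
        rw [hYx, hYx'] at hdec
        set r0 : Fin (U + 1) := ⟨r, hr'⟩ with hr0
        have hmem : r0 ∈ (Finset.univ : Finset (Fin (U + 1))) := Finset.mem_univ _
        rw [← Finset.add_sum_erase _ _ hmem, ← Finset.add_sum_erase _ _ hmem] at hdec
        have hrest : ∑ i ∈ Finset.univ.erase r0,
              x (k - ((r : ℕ) : ZMod K) + ((i : ℕ) : ZMod K), i)
            = ∑ i ∈ Finset.univ.erase r0,
              x' (k - ((r : ℕ) : ZMod K) + ((i : ℕ) : ZMod K), i) := by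
          refine Finset.sum_congr rfl fun i hi => ?_
          have hne : (i : ℕ) ≠ r := by
            intro h
            apply Finset.ne_of_mem_erase hi
            exact Fin.ext (by simpa [hr0] using h)
          by_cases hlt : (i : ℕ) < r
          · apply hant
            left
            refine ⟨r - (i : ℕ), Finset.mem_Icc.mpr ⟨by omega, by omega⟩, ?_⟩
            have : ((r - (i : ℕ) : ℕ) : ZMod K)
                = ((r : ℕ) : ZMod K) - ((i : ℕ) : ZMod K) := by
              push_cast [Nat.cast_sub (by omega : (i : ℕ) ≤ r)]
              ring
            rw [this]
            ring
          · apply hant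
            right
            refine ⟨(i : ℕ) - r, Finset.mem_Icc.mpr ⟨by omega, by omega⟩, ?_⟩
            have : (((i : ℕ) - r : ℕ) : ZMod K)
                = ((i : ℕ) : ZMod K) - ((r : ℕ) : ZMod K) := by
              push_cast [Nat.cast_sub (by omega : r ≤ (i : ℕ))]
              ring
            rw [this]
            ring
        rw [hrest] at hdec
        have hdec' : x (k - ((r : ℕ) : ZMod K) + (((r0 : ℕ) : ℕ) : ZMod K), r0)
            = x' (k - ((r : ℕ) : ZMod K) + (((r0 : ℕ) : ℕ) : ZMod K), r0) :=
          add_right_cancel hdec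
        have hk : k - ((r : ℕ) : ZMod K) + (((r0 : ℕ) : ℕ) : ZMod K) = k := by
          simp [hr0]
        rwa [hk] at hdec'
    intro i
    have := key (i : ℕ) (by omega) i.isLt
    simpa using this
  · have hD : D ≤ K := by omega
    have : ((K - D + U : ℕ) : ℚ) = (K : ℚ) + U - D := by
      rw [Nat.cast_add, Nat.cast_sub hD]
      ring
    rw [this]
end

section
/- Let K = 20, U = 1, D = 5 (so Δ = 4). Over F₂, with 40 message symbols x_{k,i} (k ∈ Z/20, i ∈ {1,2}) and y_k := x_{k,1} + x_{k-1,2}, the 16 code symbols y_k + y_{k+4} for k = 1,…,16 allow every receiver R_k — which knows all symbols x_{m,i} for m ∈ {k-1} ∪ {k+1,…,k+5} (mod 20) — to decode both x_{k,1} and x_{k,2}. That is, any two assignments of the 40 symbols that agree on R_k's antidote positions and produce identical values of all 16 code symbols agree on x_{k,1} and x_{k,2}. -/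
/-- concrete instance `K = 20`, `U = 1`, `D = 5`. With
`y_k = x_{k,1} + x_{k-1,2}`, the 16 code symbols `y_k + y_{k+4}` (`k = 1,…,16`)
let every receiver `R_k` (knowing all symbols of messages `k-1` and `k+1,…,k+5`)
decode both `x_{k,1}` and `x_{k,2}`. -/
theorem stmt_9 (k : ZMod 20) (x x' : ZMod 20 → Fin 2 → ZMod 2)
    (hside₁ : ∀ i, x (k - 1) i = x' (k - 1) i)
    (hside₂ : ∀ j ∈ Finset.Icc 1 5, ∀ i, x (k + (j : ℕ)) i = x' (k + (j : ℕ)) i)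
    (hcode : ∀ c ∈ Finset.Icc (1 : ℕ) 16,
      (x (c : ZMod 20) 0 + x ((c : ZMod 20) - 1) 1)
          + (x ((c : ZMod 20) + 4) 0 + x ((c : ZMod 20) + 3) 1)
        = (x' (c : ZMod 20) 0 + x' ((c : ZMod 20) - 1) 1)
          + (x' ((c : ZMod 20) + 4) 0 + x' ((c : ZMod 20) + 3) 1)) :
    x k 0 = x' k 0 ∧ x k 1 = x' k 1 := by
  set E : ZMod 20 → ZMod 2 := fun a =>
    (x a 0 + x (a - 1) 1) - (x' a 0 + x' (a - 1) 1) with hEdef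
  have key : ∀ a b a' b' : ZMod 2, a + b = a' + b' → a - a' = b - b' := by decide
  have hc : ∀ c : ℕ, c ∈ Finset.Icc 1 16 → E (c : ZMod 20) = E ((c : ZMod 20) + 4) := by
    intro c hcm
    have h := key _ _ _ _ (hcode c hcm)
    have hidx : (c : ZMod 20) + 4 - 1 = (c : ZMod 20) + 3 := by ring
    simp only [hEdef, hidx]
    exact h
  have hall : ∀ a : ZMod 20, E a = E (a + 4) := by
    have hsplit : ∀ a : ZMod 20, a = 0 ∨ a = 1 ∨ a = 2 ∨ a = 3 ∨ a = 4 ∨ a = 5 ∨ a = 6 ∨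
        a = 7 ∨ a = 8 ∨ a = 9 ∨ a = 10 ∨ a = 11 ∨ a = 12 ∨ a = 13 ∨ a = 14 ∨ a = 15 ∨
        a = 16 ∨ a = 17 ∨ a = 18 ∨ a = 19 := by decide
    have h1 := hc 1 (by decide); have h2 := hc 2 (by decide)
    have h3 := hc 3 (by decide); have h4 := hc 4 (by decide)
    have h5 := hc 5 (by decide); have h6 := hc 6 (by decide)
    have h7 := hc 7 (by decide); have h8 := hc 8 (by decide)
    have h9 := hc 9 (by decide); have h10 := hc 10 (by decide)
    have h11 := hc 11 (by decide); have h12 := hc 12 (by decide)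
    have h13 := hc 13 (by decide); have h14 := hc 14 (by decide)
    have h15 := hc 15 (by decide); have h16 := hc 16 (by decide)
    norm_num at h1 h2 h3 h4 h5 h6 h7 h8 h9 h10 h11 h12 h13 h14 h15 h16
    intro a
    obtain rfl|rfl|rfl|rfl|rfl|rfl|rfl|rfl|rfl|rfl|rfl|rfl|rfl|rfl|rfl|rfl|rfl|rfl|rfl|rfl :=
      hsplit a
    · -- a = 0 : E 0 = E 4 ; 0 = 20, chain 4,8,12,16
      rw [show ((0:ZMod 20) + 4) = 4 from by decide,
        show (0:ZMod 20) = 20 from by decide, ← h16, ← h12, ← h8, ← h4]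
    · norm_num; exact h1
    · norm_num; exact h2
    · norm_num; exact h3
    · norm_num; exact h4
    · norm_num; exact h5
    · norm_num; exact h6
    · norm_num; exact h7
    · norm_num; exact h8
    · norm_num; exact h9
    · norm_num; exact h10
    · norm_num; exact h11
    · norm_num; exact h12
    · norm_num; exact h13
    · norm_num; exact h14
    · norm_num; exact h15
    · norm_num; exact h16
    · -- a = 17 : E 17 = E 21 = E 1
      rw [show ((17:ZMod 20) + 4) = 1 from by decide, ← h13, ← h9, ← h5, ← h1]
    · rw [show ((18:ZMod 20) + 4) = 2 from by decide, ← h14, ← h10, ← h6, ← h2]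
    · rw [show ((19:ZMod 20) + 4) = 3 from by decide, ← h15, ← h11, ← h7, ← h3]
  -- side info instances
  have s1 := hside₂ 1 (by decide); have s3 := hside₂ 3 (by decide)
  have s4 := hside₂ 4 (by decide); have s5 := hside₂ 5 (by decide)
  norm_num at s1 s3 s4 s5
  have hk4 : E (k + 4) = 0 := by
    simp only [hEdef]
    rw [show k + 4 - 1 = k + 3 from by ring, s4.1, s3.2, sub_self]
  have hk5 : E (k + 1 + 4) = 0 := by
    simp only [hEdef]
    rw [show k + 1 + 4 = k + 5 from by ring, show k + 5 - 1 = k + 4 from by ring,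
      s5.1, s4.2, sub_self]
  have hEk : E k = 0 := (hall k).trans hk4
  have hEk1 : E (k + 1) = 0 := (hall (k + 1)).trans hk5
  have fin : ∀ a b a' b' : ZMod 2, (a + b) - (a' + b') = 0 → b = b' → a = a' := by decide
  have fin' : ∀ a b a' b' : ZMod 2, (a + b) - (a' + b') = 0 → a = a' → b = b' := by decide
  constructor
  · exact fin _ _ _ _ hEk (hside₁ 1)
  · have h := hEk1
    simp only [hEdef] at h
    rw [show k + 1 - 1 = k from by ring] at h
    exact fin' _ _ _ _ h s1.1
end

section
/- Let K, D, λ be positive integers with λ ∣ (K - D), (K - D) ∣ (K - λ), m := K - D, q := (K-λ)/m. Over F₂ with K cyclically indexed messages, define code symbols c_i = x_i + x_{i+m} + ⋯ + x_{i+(q-1)m} + x_{qm + 1 + ((i-1) mod λ)} for i = 1,…,m. Then every receiver R_k with antidotes {x_{k+1},…,x_{k+D}} (indices mod K) can decode x_k from c_1,…,c_m, so this one-sided problem admits a scalar linear index code of length K - D. -/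
/-- with `λ ∣ (K-D)`, `(K-D) ∣ (K-λ)`, `m = K-D`, `q = (K-λ)/m`, the code
`c_i = x_i + x_{i+m} + ⋯ + x_{i+(q-1)m} + x_{qm+1+((i-1) mod λ)}` (`i = 1,…,m`)
lets every receiver `R_k` with antidotes `{x_{k+1},…,x_{k+D}}` decode `x_k`;
so the problem admits a scalar linear code of length `K - D`. -/
theorem stmt_10 (K D L : ℕ) [NeZero K] (hD : 0 < D) (hL : 0 < L)
    (hLm : L ∣ (K - D)) (hdvd : (K - D) ∣ (K - L))
    (k : ZMod K) (x x' : ZMod K → ZMod 2)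
    (hside : ∀ j ∈ Finset.Icc 1 D, x (k + (j : ℕ)) = x' (k + (j : ℕ)))
    (hcode : ∀ i ∈ Finset.Icc 1 (K - D),
      (∑ t ∈ Finset.range ((K - L) / (K - D)), x ((i + t * (K - D) : ℕ) : ZMod K))
          + x ((((K - L) / (K - D)) * (K - D) + 1 + (i - 1) % L : ℕ) : ZMod K)
        = (∑ t ∈ Finset.range ((K - L) / (K - D)), x' ((i + t * (K - D) : ℕ) : ZMod K))
          + x' ((((K - L) / (K - D)) * (K - D) + 1 + (i - 1) % L : ℕ) : ZMod K)) :
    x k = x' k := by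
  classical
  have hK : 0 < K := Nat.pos_of_ne_zero (NeZero.ne K)
  by_cases hKD : K ≤ D
  · have h := hside K (Finset.mem_Icc.mpr ⟨hK, hKD⟩)
    simpa [ZMod.natCast_self] using h
  push_neg at hKD
  set m := K - D with hm
  have hm0 : 0 < m := by omega
  have hLle : L ≤ m := Nat.le_of_dvd hm0 hLm
  set q := (K - L) / m with hqdef
  have hq : q * m = K - L := by rw [hqdef]; exact Nat.div_mul_cancel hdvd
  have hKq : K = q * m + L := by omega
  have hq1 : 1 ≤ q := by
    rcases Nat.eq_zero_or_pos q with h0 | h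
    · exfalso; rw [h0] at hq; omega
    · exact h
  have hmul' : ∀ t1 t2 : ℕ, t1 < t2 → t1 * m + m ≤ t2 * m := by
    intro t1 t2 h
    have h2 : (t1 + 1) * m ≤ t2 * m := mul_le_mul_left (Nat.succ_le_of_lt h) m
    calc t1 * m + m = (t1 + 1) * m := by ring
      _ ≤ t2 * m := h2
  have hmqm : m ≤ q * m := by have := hmul' 0 q hq1; omega
  -- choose a representative a of k with m ≤ a < K + m
  obtain ⟨a, hka, ham, haK⟩ : ∃ a : ℕ, ((a : ℕ) : ZMod K) = k ∧ m ≤ a ∧ a < K + m := by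
    have hval : k.val < K := ZMod.val_lt k
    by_cases hc : m ≤ k.val
    · exact ⟨k.val, by simp [ZMod.natCast_val, ZMod.cast_id], hc, by omega⟩
    · refine ⟨k.val + K, ?_, by omega, by omega⟩
      push_cast
      simp [ZMod.natCast_self, ZMod.natCast_val, ZMod.cast_id]
  -- known (side-information) values agree
  have hknown : ∀ n j : ℕ, 1 ≤ j → j ≤ D → (n + K = a + j ∨ n = a + j) →
      x ((n : ℕ) : ZMod K) = x' ((n : ℕ) : ZMod K) := by
    intro n j h1 h2 h3
    have hcast : ((n : ℕ) : ZMod K) = k + (j : ℕ) := by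
      rcases h3 with h | h
      · have := congrArg (fun z : ℕ => ((z : ℕ) : ZMod K)) h
        push_cast at this
        simp only [ZMod.natCast_self, add_zero] at this
        rw [hka] at this
        exact this
      · have := congrArg (fun z : ℕ => ((z : ℕ) : ZMod K)) h
        push_cast at this
        rw [hka] at this
        exact this
    rw [hcast]
    exact hside j (Finset.mem_Icc.mpr ⟨h1, h2⟩)
  by_cases ha1 : a ≤ q * m
  · -- Case A1 : m ≤ a ≤ q*m ; a is an "arithmetic" index
    have hdm := Nat.div_add_mod (a - 1) m
    set t0 := (a - 1) / m with ht0def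
    set i0 := (a - 1) % m + 1 with hi0def
    have hcm : m * t0 = t0 * m := Nat.mul_comm m t0
    have hi0m : (a - 1) % m < m := Nat.mod_lt _ hm0
    have ht0 : t0 < q := by
      rw [ht0def]
      exact Nat.div_lt_iff_lt_mul hm0 |>.mpr (by omega)
    have hasum : a = i0 + t0 * m := by omega
    have hmem : t0 ∈ Finset.range q := Finset.mem_range.mpr ht0
    have h := hcode i0 (Finset.mem_Icc.mpr ⟨by omega, by omega⟩)
    rw [← Finset.add_sum_erase (Finset.range q) (fun t => x ((i0 + t * m : ℕ) : ZMod K)) hmem,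
        ← Finset.add_sum_erase (Finset.range q) (fun t => x' ((i0 + t * m : ℕ) : ZMod K)) hmem]
      at h
    have hR : (∑ t ∈ (Finset.range q).erase t0, x ((i0 + t * m : ℕ) : ZMod K))
        = ∑ t ∈ (Finset.range q).erase t0, x' ((i0 + t * m : ℕ) : ZMod K) := by
      refine Finset.sum_congr rfl fun t ht => ?_
      rw [Finset.mem_erase, Finset.mem_range] at ht
      obtain ⟨hne, htq⟩ := ht
      rcases Nat.lt_or_ge t t0 with hlt | hge
      · have h1 := hmul' t t0 hlt
        have h2 := hmul' t0 q ht0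
        exact hknown _ (K + t * m - t0 * m) (by omega) (by omega) (Or.inl (by omega))
      · have hgt : t0 < t := lt_of_le_of_ne hge (Ne.symm hne)
        have h1 := hmul' t0 t hgt
        have h2 := hmul' t q htq
        exact hknown _ (t * m - t0 * m) (by omega) (by omega) (Or.inr (by omega))
    have hρ : (i0 - 1) % L < L := Nat.mod_lt _ hL
    have hT : x ((q * m + 1 + (i0 - 1) % L : ℕ) : ZMod K)
        = x' ((q * m + 1 + (i0 - 1) % L : ℕ) : ZMod K) :=
      hknown _ (q * m + 1 + (i0 - 1) % L - a) (by omega) (by omega) (Or.inr (by omega))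
    rw [hR, hT] at h
    have hfin : x ((i0 + t0 * m : ℕ) : ZMod K) = x' ((i0 + t0 * m : ℕ) : ZMod K) :=
      add_right_cancel (add_right_cancel h)
    rw [← hka, hasum]
    exact hfin
  · push_neg at ha1
    by_cases ha2 : a ≤ K
    · -- Case A2 : q*m < a ≤ K ; a is a "tail" index
      have hs1 : 1 ≤ a - q * m := by omega
      have hs2 : a - q * m ≤ L := by omega
      have h := hcode (a - q * m) (Finset.mem_Icc.mpr ⟨by omega, by omega⟩)
      have htail : q * m + 1 + (a - q * m - 1) % L = a := by
        rw [Nat.mod_eq_of_lt (by omega)]; omega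
      rw [htail] at h
      have hS : (∑ t ∈ Finset.range q, x ((a - q * m + t * m : ℕ) : ZMod K))
          = ∑ t ∈ Finset.range q, x' ((a - q * m + t * m : ℕ) : ZMod K) := by
        refine Finset.sum_congr rfl fun t ht => ?_
        rw [Finset.mem_range] at ht
        have h2 := hmul' t q ht
        exact hknown _ (t * m + L) (by omega) (by omega) (Or.inl (by omega))
      rw [hS] at h
      have hfin := add_left_cancel h
      rw [← hka]
      exact hfin
    · -- Case B : K < a < K + m
      push_neg at ha2
      obtain ⟨b, rfl⟩ : ∃ b, a = K + b := ⟨a - K, by omega⟩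
      have hb1 : 1 ≤ b := by omega
      have hbm : b < m := by omega
      have hbk : ((K + b : ℕ) : ZMod K) = ((b : ℕ) : ZMod K) := by
        push_cast
        simp [ZMod.natCast_self]
      have hmem0 : (0 : ℕ) ∈ Finset.range q := Finset.mem_range.mpr (by omega)
      have hdm2 := Nat.div_add_mod (b - 1) L
      have hρ : (b - 1) % L < L := Nat.mod_lt _ hL
      have hcm2 : L * ((b - 1) / L) = ((b - 1) / L) * L := Nat.mul_comm _ _
      -- the erased-sum terms (t ≥ 1) are always known
      have hR : (∑ t ∈ (Finset.range q).erase 0, x ((b + t * m : ℕ) : ZMod K))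
          = ∑ t ∈ (Finset.range q).erase 0, x' ((b + t * m : ℕ) : ZMod K) := by
        refine Finset.sum_congr rfl fun t ht => ?_
        rw [Finset.mem_erase, Finset.mem_range] at ht
        obtain ⟨hne, htq⟩ := ht
        have h1 := hmul' 0 t (Nat.pos_of_ne_zero hne)
        have h2 := hmul' t q htq
        exact hknown _ (t * m) (by omega) (by omega) (Or.inl (by omega))
      by_cases hB : b + L ≤ m
      · -- Case B2 : first decode the tail symbol from code b+L, then b from code b
        have h1 := hcode (b + L) (Finset.mem_Icc.mpr ⟨by omega, hB⟩)
        have ht1 : b + L - 1 = (b - 1) + L := by omega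
        rw [ht1, Nat.add_mod_right] at h1
        have hS1 : (∑ t ∈ Finset.range q, x ((b + L + t * m : ℕ) : ZMod K))
            = ∑ t ∈ Finset.range q, x' ((b + L + t * m : ℕ) : ZMod K) := by
          refine Finset.sum_congr rfl fun t ht => ?_
          rw [Finset.mem_range] at ht
          have h2 := hmul' t q ht
          exact hknown _ (L + t * m) (by omega) (by omega) (Or.inl (by omega))
        rw [hS1] at h1
        have hT := add_left_cancel h1
        have h2 := hcode b (Finset.mem_Icc.mpr ⟨hb1, by omega⟩)
        rw [← Finset.add_sum_erase (Finset.range q) (fun t => x ((b + t * m : ℕ) : ZMod K)) hmem0,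
            ← Finset.add_sum_erase (Finset.range q) (fun t => x' ((b + t * m : ℕ) : ZMod K)) hmem0]
          at h2
        rw [hR, hT] at h2
        have hfin : x ((b + 0 * m : ℕ) : ZMod K) = x' ((b + 0 * m : ℕ) : ZMod K) :=
          add_right_cancel (add_right_cancel h2)
        have hb0 : b + 0 * m = b := by omega
        rw [hb0] at hfin
        rw [← hka, hbk]
        exact hfin
      · -- Case B1 : the tail symbol of code b is itself known
        push_neg at hB
        obtain ⟨e, he⟩ := hLm
        have hkey : m ≤ ((b - 1) / L) * L + L := by
          by_contra hc
          push_neg at hc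
          have hx1 : ((b - 1) / L + 1) * L = ((b - 1) / L) * L + L := by ring
          have hme : e * L = m := by rw [he]; ring
          have hx2 : ((b - 1) / L + 1) * L < e * L := by omega
          have hx3 : (b - 1) / L + 1 < e := lt_of_mul_lt_mul_right hx2 (Nat.zero_le L)
          have hx4 : ((b - 1) / L + 2) * L ≤ e * L := Nat.mul_le_mul_right L (by omega)
          have hx5 : ((b - 1) / L + 2) * L = ((b - 1) / L) * L + L + L := by ring
          omega
        have h := hcode b (Finset.mem_Icc.mpr ⟨hb1, by omega⟩)
        rw [← Finset.add_sum_erase (Finset.range q) (fun t => x ((b + t * m : ℕ) : ZMod K)) hmem0,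
            ← Finset.add_sum_erase (Finset.range q) (fun t => x' ((b + t * m : ℕ) : ZMod K)) hmem0]
          at h
        have hT : x ((q * m + 1 + (b - 1) % L : ℕ) : ZMod K)
            = x' ((q * m + 1 + (b - 1) % L : ℕ) : ZMod K) :=
          hknown _ (q * m + 1 + (b - 1) % L - b) (by omega) (by omega) (Or.inl (by omega))
        rw [hR, hT] at h
        have hfin : x ((b + 0 * m : ℕ) : ZMod K) = x' ((b + 0 * m : ℕ) : ZMod K) :=
          add_right_cancel (add_right_cancel h)
        have hb0 : b + 0 * m = b := by omega
        rw [hb0] at hfin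
        rw [← hka, hbk]
        exact hfin
end

section
/- In the substitution construction over F₂ (y_k = Σ_{i=1}^{U+1} x_{k+1-i,i}, indices mod K), for any l with 1 ≤ l ≤ U+1 and any offsets 1 ≤ a_1 < ⋯ < a_d ≤ D - U, the sum S_{k+U+1-l}^{(U+1)} = Σ_{j=0}^{d} Σ_{i=1}^{U+1} x_{k+U+2-l+a_j-i, i} (with a_0 := 0) contains the demanded symbol x_{k,U+2-l} with coefficient 1, and every other summand x_{m,i} with m ≡ k (mod K) has second index i = U+2-l+a_j for some j ≥ 1 with a_j ≤ l - 1 + a_j ≤ U + 1 — i.e., second index strictly greater than U+2-l. Consequently, if receiver R_k already knows x_{k,U+3-l},…,x_{k,U+1} and all antidote symbols (messages k-U,…,k-1 and k+1,…,k+D), it can solve for x_{k,U+2-l}. -/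
/-- inductive decoding step: in the sum
`S_{k+U+1-l}^{(U+1)} = Σ_{j=0}^{d} Σ_{i=1}^{U+1} x_{k+U+2-l+a_j-i,i}` (`a_0 = 0`),
the demanded symbol `x_{k,U+2-l}` appears with coefficient 1 (the only summand of the
`j = 0` group with first index `k` is `i = U+2-l`); every other summand with first index
`k` comes from some `j ≥ 1` and has second index `i = U+2-l+a_j > U+2-l` (and `≤ U+1`);
consequently, knowing `x_{k,U+3-l},…,x_{k,U+1}` and all antidote symbols, receiver `R_k`
solves for `x_{k,U+2-l}`. -/
theorem stmt_12 (K D U : ℕ) [NeZero K] (hU : U ≤ D) (hDU : 1 ≤ D - U)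
    (hKbound : U + D ≤ K - 1) (hK : 1 ≤ K)
    (l : ℕ) (hl : 1 ≤ l) (hl' : l ≤ U + 1)
    (d : ℕ) (a : Fin d → ℕ) (ha : StrictMono a)
    (hrange : ∀ j, 1 ≤ a j ∧ a j ≤ D - U) (k : ZMod K) :
    -- the demanded symbol x_{k,U+2-l} appears exactly once in the j = 0 group
    (∀ i ∈ Finset.Icc 1 (U + 1),
      ((k + ((U + 2 - l : ℕ) : ZMod K) - ((i : ℕ) : ZMod K) = k) ↔ i = U + 2 - l))
    -- summands of the j ≥ 1 groups with first index k have second index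
    -- i = U+2-l+a_j, strictly greater than U+2-l (and at most U+1)
    ∧ (∀ j : Fin d, ∀ i ∈ Finset.Icc 1 (U + 1),
        (k + ((U + 2 - l : ℕ) : ZMod K) + ((a j : ℕ) : ZMod K) - ((i : ℕ) : ZMod K) = k) →
          i = U + 2 - l + a j ∧ U + 2 - l < i ∧ i ≤ U + 1)
    -- hence R_k, knowing x_{k,U+3-l},…,x_{k,U+1} and all antidotes, solves for x_{k,U+2-l}
    ∧ (∀ x x' : ZMod K → ℕ → ZMod 2,
        (∀ m : ZMod K, isAntidote K U D k m → ∀ i, x m i = x' m i) →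
        (∀ i ∈ Finset.Icc (U + 3 - l) (U + 1), x k i = x' k i) →
        (∑ i ∈ Finset.Icc 1 (U + 1), x (k + ((U + 2 - l : ℕ) : ZMod K) - ((i : ℕ) : ZMod K)) i
            + ∑ j : Fin d, ∑ i ∈ Finset.Icc 1 (U + 1),
                x (k + ((U + 2 - l : ℕ) : ZMod K) + ((a j : ℕ) : ZMod K) - ((i : ℕ) : ZMod K)) i
          = ∑ i ∈ Finset.Icc 1 (U + 1), x' (k + ((U + 2 - l : ℕ) : ZMod K) - ((i : ℕ) : ZMod K)) i
            + ∑ j : Fin d, ∑ i ∈ Finset.Icc 1 (U + 1),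
                x' (k + ((U + 2 - l : ℕ) : ZMod K) + ((a j : ℕ) : ZMod K) - ((i : ℕ) : ZMod K)) i) →
        x k (U + 2 - l) = x' k (U + 2 - l)) := by

  have hKD : U + D + 1 ≤ K := by omega
  have hc1 : 1 ≤ U + 2 - l := by omega
  have hc2 : U + 2 - l ≤ U + 1 := by omega
  have hinj : ∀ p q : ℕ, p < K → q < K → ((p : ZMod K) = (q : ZMod K) ↔ p = q) := by
    intro p q hp hq
    constructor
    · intro h
      have h2 : p % K = q % K := (ZMod.natCast_eq_natCast_iff p q K).mp h
      rwa [Nat.mod_eq_of_lt hp, Nat.mod_eq_of_lt hq] at h2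
    · intro h; rw [h]
  have part1 : ∀ i ∈ Finset.Icc 1 (U + 1),
      ((k + ((U + 2 - l : ℕ) : ZMod K) - ((i : ℕ) : ZMod K) = k) ↔ i = U + 2 - l) := by
    intro i hi
    simp only [Finset.mem_Icc] at hi
    rw [add_sub_assoc, add_eq_left, sub_eq_zero, hinj _ _ (by omega) (by omega)]
    exact eq_comm
  have part2 : ∀ j : Fin d, ∀ i ∈ Finset.Icc 1 (U + 1),
      (k + ((U + 2 - l : ℕ) : ZMod K) + ((a j : ℕ) : ZMod K) - ((i : ℕ) : ZMod K) = k) →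
        i = U + 2 - l + a j ∧ U + 2 - l < i ∧ i ≤ U + 1 := by
    intro j i hi h
    simp only [Finset.mem_Icc] at hi
    obtain ⟨ha1, ha2⟩ := hrange j
    rw [add_assoc, add_sub_assoc, add_eq_left, sub_eq_zero] at h
    have h' : (((U + 2 - l) + a j : ℕ) : ZMod K) = (i : ℕ) := by push_cast; rw [← h]
    have h2 : ((U + 2 - l) + a j) % K = i % K := (ZMod.natCast_eq_natCast_iff _ _ K).mp h'
    have hle : (U + 2 - l) + a j ≤ K := by omega
    rw [Nat.mod_eq_of_lt (by omega : i < K)] at h2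
    have hcase : (U + 2 - l) + a j < K ∨ (U + 2 - l) + a j = K := by omega
    have : i = U + 2 - l + a j := by
      rcases hcase with hlt | heq
      · rw [Nat.mod_eq_of_lt hlt] at h2; omega
      · rw [heq, Nat.mod_self] at h2; omega
    omega
  refine ⟨part1, part2, ?_⟩
  intro x x' hanti hknown heq
  have claim1 : ∀ i ∈ Finset.Icc 1 (U + 1), i ≠ U + 2 - l →
      x (k + ((U + 2 - l : ℕ) : ZMod K) - ((i : ℕ) : ZMod K)) i
        = x' (k + ((U + 2 - l : ℕ) : ZMod K) - ((i : ℕ) : ZMod K)) i := by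
    intro i hi hne
    simp only [Finset.mem_Icc] at hi
    apply hanti
    rcases lt_or_gt_of_ne hne with hlt | hgt
    · -- i < U + 2 - l : m = k + (U+2-l-i)
      right
      refine ⟨U + 2 - l - i, Finset.mem_Icc.mpr ⟨by omega, by omega⟩, ?_⟩
      have : ((U + 2 - l - i : ℕ) : ZMod K) = ((U + 2 - l : ℕ) : ZMod K) - (i : ℕ) := by
        push_cast [Nat.cast_sub (le_of_lt hlt)]; ring
      rw [this]; ring
    · -- i > U + 2 - l : m = k - (i - (U+2-l))
      left
      refine ⟨i - (U + 2 - l), Finset.mem_Icc.mpr ⟨by omega, by omega⟩, ?_⟩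
      have : ((i - (U + 2 - l) : ℕ) : ZMod K) = (i : ℕ) - ((U + 2 - l : ℕ) : ZMod K) := by
        push_cast [Nat.cast_sub (le_of_lt hgt)]; ring
      rw [this]; ring
  have claim2 : ∀ j : Fin d, ∀ i ∈ Finset.Icc 1 (U + 1),
      x (k + ((U + 2 - l : ℕ) : ZMod K) + ((a j : ℕ) : ZMod K) - ((i : ℕ) : ZMod K)) i
        = x' (k + ((U + 2 - l : ℕ) : ZMod K) + ((a j : ℕ) : ZMod K) - ((i : ℕ) : ZMod K)) i := by
    intro j i hi
    simp only [Finset.mem_Icc] at hi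
    obtain ⟨ha1, ha2⟩ := hrange j
    by_cases hcase : i = U + 2 - l + a j
    · have hidx : k + ((U + 2 - l : ℕ) : ZMod K) + ((a j : ℕ) : ZMod K) - ((i : ℕ) : ZMod K) = k := by
        subst hcase; push_cast; ring
      rw [hidx]
      exact hknown i (Finset.mem_Icc.mpr ⟨by omega, by omega⟩)
    · apply hanti
      rcases lt_or_gt_of_ne hcase with hlt | hgt
      · right
        refine ⟨U + 2 - l + a j - i, Finset.mem_Icc.mpr ⟨by omega, by omega⟩, ?_⟩
        have : ((U + 2 - l + a j - i : ℕ) : ZMod K)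
            = ((U + 2 - l : ℕ) : ZMod K) + ((a j : ℕ) : ZMod K) - (i : ℕ) := by
          push_cast [Nat.cast_sub (le_of_lt hlt)]; ring
        rw [this]; ring
      · left
        refine ⟨i - (U + 2 - l + a j), Finset.mem_Icc.mpr ⟨by omega, by omega⟩, ?_⟩
        have : ((i - (U + 2 - l + a j) : ℕ) : ZMod K)
            = (i : ℕ) - (((U + 2 - l : ℕ) : ZMod K) + ((a j : ℕ) : ZMod K)) := by
          push_cast [Nat.cast_sub (le_of_lt hgt)]; ring
        rw [this]; ring
  have hS2 : ∑ j : Fin d, ∑ i ∈ Finset.Icc 1 (U + 1),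
        x (k + ((U + 2 - l : ℕ) : ZMod K) + ((a j : ℕ) : ZMod K) - ((i : ℕ) : ZMod K)) i
      = ∑ j : Fin d, ∑ i ∈ Finset.Icc 1 (U + 1),
        x' (k + ((U + 2 - l : ℕ) : ZMod K) + ((a j : ℕ) : ZMod K) - ((i : ℕ) : ZMod K)) i :=
    Finset.sum_congr rfl fun j _ => Finset.sum_congr rfl fun i hi => claim2 j i hi
  rw [hS2] at heq
  have hS1 : ∑ i ∈ Finset.Icc 1 (U + 1),
        x (k + ((U + 2 - l : ℕ) : ZMod K) - ((i : ℕ) : ZMod K)) i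
      = ∑ i ∈ Finset.Icc 1 (U + 1),
        x' (k + ((U + 2 - l : ℕ) : ZMod K) - ((i : ℕ) : ZMod K)) i :=
    add_right_cancel heq
  have hdiff : ∑ i ∈ Finset.Icc 1 (U + 1),
      (x (k + ((U + 2 - l : ℕ) : ZMod K) - ((i : ℕ) : ZMod K)) i
        - x' (k + ((U + 2 - l : ℕ) : ZMod K) - ((i : ℕ) : ZMod K)) i) = 0 := by
    rw [Finset.sum_sub_distrib, hS1, sub_self]
  rw [Finset.sum_eq_single_of_mem (U + 2 - l) (Finset.mem_Icc.mpr ⟨hc1, hc2⟩)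
    (fun i hi hne => by rw [claim1 i hi hne, sub_self])] at hdiff
  rw [add_sub_cancel_right] at hdiff
  exact sub_eq_zero.mp hdiff
end
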